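/- arXiv:1107.2372 — 2 statements merged into one kernel-verified Lean document; each statement's English description precedes it below -/
import Mathlib

section
/- Let E be a Hilbert C*-module over a C*-algebra A, let L ⊆ E be a convex set and let x₀ ∈ E. Then for any y₁,…,yₙ ∈ L and convex coefficients λ₁,…,λₙ ≥ 0 with ∑ λ_j = 1, one has ∑_{j=1}^n λ_j ⟨y_j − x₀, y_j − x₀⟩ ≥ ⟨x₀ − ∑_j λ_j y_j, x₀ − ∑_j λ_j y_j⟩ in the positive cone of A. Consequently, if δ := inf{‖y − x₀‖² : y ∈ L} > 0, then every element b of the closed convex hull of {⟨y−x₀, y−x₀⟩ : y ∈ L} satisfies ‖b‖ ≥ δ. -/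
open scoped ComplexOrder RightActions InnerProductSpace
open CStarModule

noncomputable section

/-- Key convexity estimate for the C⋆-valued quadratic form. -/
theorem cstar_inner_convex_aux
    {A E : Type*} [CStarAlgebra A] [PartialOrder A] [StarOrderedRing A]
    [NormedAddCommGroup E] [NormedSpace ℂ E] [SMul A E] [CStarModule A E]
    {ι : Type*} [Fintype ι] (z : ι → E) (lam : ι → ℝ)
    (h0 : ∀ i, 0 ≤ lam i) (h1 : ∑ i, lam i = 1) :
    ⟪∑ j, ((lam j : ℝ) : ℂ) • z j, ∑ j, ((lam j : ℝ) : ℂ) • z j⟫_A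
      ≤ ∑ j, ((lam j : ℝ) : ℂ) • ⟪z j, z j⟫_A := by
  set c : ι → ℂ := fun j => ((lam j : ℝ) : ℂ) with hc
  set m : E := ∑ j, c j • z j with hm
  have hstar : ∀ j, star (c j) = c j := fun j => by
    simp [hc, Complex.star_def, Complex.conj_ofReal]
  have hsum1 : ∑ j, c j = 1 := by
    rw [hc, ← Complex.ofReal_sum, h1, Complex.ofReal_one]
  have hA : ∑ j, c j • ⟪z j, m⟫_A = ⟪m, m⟫_A := by
    have : ∀ j, c j • ⟪z j, m⟫_A = ⟪c j • z j, m⟫_A := fun j => by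
      rw [inner_smul_left_complex, hstar]
    simp_rw [this]
    rw [← inner_sum_left, ← hm]
  have hB : ∑ j, c j • ⟪m, z j⟫_A = ⟪m, m⟫_A := by
    have : ∀ j, c j • ⟪m, z j⟫_A = ⟪m, c j • z j⟫_A := fun j => by
      rw [inner_smul_right_complex]
    simp_rw [this]
    rw [← inner_sum_right, ← hm]
  have key : ∑ j, c j • ⟪z j - m, z j - m⟫_A
      = ∑ j, c j • ⟪z j, z j⟫_A - ⟪m, m⟫_A := by
    have expand : ∀ j, c j • ⟪z j - m, z j - m⟫_A
        = c j • ⟪z j, z j⟫_A - c j • ⟪z j, m⟫_A - c j • ⟪m, z j⟫_A + c j • ⟪m, m⟫_A := by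
      intro j
      simp only [CStarModule.inner_sub_left, CStarModule.inner_sub_right, smul_sub]
      abel
    simp_rw [expand]
    rw [Finset.sum_add_distrib, Finset.sum_sub_distrib, Finset.sum_sub_distrib,
      hA, hB, ← Finset.sum_smul, hsum1, one_smul]
    abel
  have nonneg : (0 : A) ≤ ∑ j, c j • ⟪z j - m, z j - m⟫_A := by
    refine Finset.sum_nonneg fun j _ => ?_
    rw [hc]
    rw [Complex.coe_smul]
    exact smul_nonneg (h0 j) inner_self_nonneg
  rw [key] at nonneg
  exact sub_nonneg.mp nonneg

/-- Let `L` be a convex subset of a Hilbert C⋆-module `E` over `A` and `x₀ ∈ E`. Then for any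
`y₁, …, yₙ ∈ L` and convex coefficients `λⱼ`, one has
`∑ λⱼ ⟪yⱼ − x₀, yⱼ − x₀⟫ ≥ ⟪x₀ − ∑ λⱼ yⱼ, x₀ − ∑ λⱼ yⱼ⟫` in the positive cone of `A`.
Consequently, if `δ := inf {‖y − x₀‖² : y ∈ L} > 0`, then every element `b` of the closed
convex hull of `{⟪y − x₀, y − x₀⟫ : y ∈ L}` satisfies `‖b‖ ≥ δ`. -/
theorem convex_set_inner_estimates
    {A E : Type*} [CStarAlgebra A] [PartialOrder A] [StarOrderedRing A]
    [NormedAddCommGroup E] [NormedSpace ℂ E] [SMul A E] [CStarModule A E]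
    (L : Set E) (hL : Convex ℝ L) (x₀ : E) :
    (∀ (n : ℕ) (y : Fin n → E), (∀ i, y i ∈ L) → ∀ lam : Fin n → ℝ,
      (∀ i, 0 ≤ lam i) → ∑ i, lam i = 1 →
      ⟪x₀ - ∑ j, ((lam j : ℝ) : ℂ) • y j, x₀ - ∑ j, ((lam j : ℝ) : ℂ) • y j⟫_A
        ≤ ∑ j, ((lam j : ℝ) : ℂ) • ⟪y j - x₀, y j - x₀⟫_A)
    ∧ (0 < sInf {r : ℝ | ∃ y ∈ L, r = ‖y - x₀‖ ^ 2} →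
        ∀ b ∈ closure (convexHull ℝ {a : A | ∃ y ∈ L, a = ⟪y - x₀, y - x₀⟫_A}),
          sInf {r : ℝ | ∃ y ∈ L, r = ‖y - x₀‖ ^ 2} ≤ ‖b‖) := by
  have main : ∀ (ι : Type) (_ : Fintype ι) (y : ι → E), (∀ i, y i ∈ L) → ∀ lam : ι → ℝ,
      (∀ i, 0 ≤ lam i) → ∑ i, lam i = 1 →
      ⟪x₀ - ∑ j, ((lam j : ℝ) : ℂ) • y j, x₀ - ∑ j, ((lam j : ℝ) : ℂ) • y j⟫_A
        ≤ ∑ j, ((lam j : ℝ) : ℂ) • ⟪y j - x₀, y j - x₀⟫_A := by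
    intro ι _ y hy lam h0 h1
    have hsum1 : ∑ j, ((lam j : ℝ) : ℂ) = 1 := by
      rw [← Complex.ofReal_sum, h1, Complex.ofReal_one]
    have hm : ∑ j, ((lam j : ℝ) : ℂ) • (x₀ - y j)
        = x₀ - ∑ j, ((lam j : ℝ) : ℂ) • y j := by
      simp only [smul_sub, Finset.sum_sub_distrib, ← Finset.sum_smul, hsum1, one_smul]
    have := cstar_inner_convex_aux (A := A) (fun j => x₀ - y j) lam h0 h1
    rw [hm] at this
    have hswap : ∀ u v : E, ⟪u - v, u - v⟫_A = ⟪v - u, v - u⟫_A := fun u v => by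
      rw [show u - v = -(v - u) by abel, CStarModule.inner_neg_left,
        CStarModule.inner_neg_right, neg_neg]
    calc ⟪x₀ - ∑ j, ((lam j : ℝ) : ℂ) • y j, x₀ - ∑ j, ((lam j : ℝ) : ℂ) • y j⟫_A
        ≤ ∑ j, ((lam j : ℝ) : ℂ) • ⟪x₀ - y j, x₀ - y j⟫_A := this
      _ = ∑ j, ((lam j : ℝ) : ℂ) • ⟪y j - x₀, y j - x₀⟫_A := by
          exact Finset.sum_congr rfl fun j _ => by rw [hswap]
  refine ⟨fun n y hy lam h0 h1 => main (Fin n) inferInstance y hy lam h0 h1, ?_⟩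
  intro _ b hb
  set δ := sInf {r : ℝ | ∃ y ∈ L, r = ‖y - x₀‖ ^ 2} with hδdef
  have hsub : convexHull ℝ {a : A | ∃ y ∈ L, a = ⟪y - x₀, y - x₀⟫_A}
      ⊆ {b : A | δ ≤ ‖b‖} := by
    intro a ha
    rw [mem_convexHull_iff_exists_fintype] at ha
    obtain ⟨ι, _, w, zz, hw0, hw1, hzS, hsum⟩ := ha
    choose y hyL hyz using hzS
    -- the convex combination of the points
    have hw' : ∑ i, w i • y i ∈ L :=
      hL.sum_mem (fun i _ => hw0 i) hw1 (fun i _ => hyL i)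
    have hcoe : ∀ i : ι, ((w i : ℝ) : ℂ) • y i = w i • y i := fun i =>
      Complex.coe_smul (w i) (y i)
    have hkey := main ι inferInstance y hyL w hw0 hw1
    have ha' : a = ∑ j, ((w j : ℝ) : ℂ) • ⟪y j - x₀, y j - x₀⟫_A := by
      rw [← hsum]
      refine Finset.sum_congr rfl fun j _ => ?_
      rw [hyz j, Complex.coe_smul]
    rw [← ha'] at hkey
    have hnonneg : (0 : A) ≤ ⟪x₀ - ∑ j, ((w j : ℝ) : ℂ) • y j,
        x₀ - ∑ j, ((w j : ℝ) : ℂ) • y j⟫_A := inner_self_nonneg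
    have hnorm : ‖⟪x₀ - ∑ j, ((w j : ℝ) : ℂ) • y j,
        x₀ - ∑ j, ((w j : ℝ) : ℂ) • y j⟫_A‖ ≤ ‖a‖ :=
      CStarAlgebra.norm_le_norm_of_nonneg_of_le hnonneg hkey
    have hδle : δ ≤ ‖x₀ - ∑ j, ((w j : ℝ) : ℂ) • y j‖ ^ 2 := by
      have hmem : ‖(∑ i, w i • y i) - x₀‖ ^ 2
          ∈ {r : ℝ | ∃ y ∈ L, r = ‖y - x₀‖ ^ 2} := ⟨_, hw', rfl⟩
      have hbdd : BddBelow {r : ℝ | ∃ y ∈ L, r = ‖y - x₀‖ ^ 2} := by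
        refine ⟨0, fun r hr => ?_⟩
        obtain ⟨y', _, rfl⟩ := hr
        positivity
      have := csInf_le hbdd hmem
      calc δ ≤ ‖(∑ i, w i • y i) - x₀‖ ^ 2 := this
        _ = ‖x₀ - ∑ j, ((w j : ℝ) : ℂ) • y j‖ ^ 2 := by
            have heq : (∑ i, w i • y i) = ∑ j, ((w j : ℝ) : ℂ) • y j :=
              Finset.sum_congr rfl fun j _ => (hcoe j).symm
            rw [norm_sub_rev, heq]
    calc δ ≤ ‖x₀ - ∑ j, ((w j : ℝ) : ℂ) • y j‖ ^ 2 := hδle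
      _ = ‖⟪x₀ - ∑ j, ((w j : ℝ) : ℂ) • y j,
          x₀ - ∑ j, ((w j : ℝ) : ℂ) • y j⟫_A‖ := norm_sq_eq A
      _ ≤ ‖a‖ := hnorm
  have hclosed : IsClosed {b : A | δ ≤ ‖b‖} :=
    isClosed_le continuous_const continuous_norm
  exact closure_minimal hsub hclosed hb

end
end

section
/- Let E be a Hilbert C*-module over a C*-algebra A and let L ⊆ E be a closed convex subset. For every x₀ ∈ E \ L there exists a state ω on A such that in the localization Hilbert space E^ω (the completion of E with respect to the semi-inner product (x,y) ↦ ω(⟨x,y⟩)) the image ι_ω(x₀) is not in the closure of ι_ω(L). In particular, if L is a closed proper A-submodule of E, there exists a state ω such that the closure of ι_ω(L) in E^ω has nonzero orthogonal complement. -/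
open scoped ComplexOrder RightActions InnerProductSpace
open CStarModule

noncomputable section

/-- The December 2024 Mathlib `CStarModule` (right `A`-action through `Aᵐᵒᵖ`), restated here
because Mathlib's `CStarModule` now uses a left action `SMul A E`. -/
class CStarModuleRight (A : outParam <| Type*) (E : Type*) [NonUnitalSemiring A] [StarRing A]
    [Module ℂ A] [AddCommGroup E] [Module ℂ E] [PartialOrder A] [SMul Aᵐᵒᵖ E] [Norm A] [Norm E]
    extends Inner A E where
  inner_add_right {x} {y} {z} : inner x (y + z) = inner x y + inner x z
  inner_self_nonneg {x} : 0 ≤ inner x x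
  inner_self {x} : inner x x = 0 ↔ x = 0
  inner_op_smul_right {a : A} {x y : E} : inner x (y <• a) = inner x y * a
  inner_smul_right_complex {z : ℂ} {x} {y} : inner x (z • y) = z • inner x y
  star_inner x y : star (inner x y) = inner y x
  norm_eq_sqrt_norm_inner_self x : ‖x‖ = √‖inner x x‖

/-- An unbounded operator in a Hilbert C⋆-module `E`: a `ℂ`-linear map defined on a
`ℂ`-submodule of `E`. -/
structure UnboundedOperator (E : Type*) [NormedAddCommGroup E] [Module ℂ E] where
  dom : Submodule ℂ E
  toFun : dom →ₗ[ℂ] E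

namespace UnboundedOperator

variable {A E : Type*} [CStarAlgebra A] [PartialOrder A] [StarOrderedRing A]
  [NormedAddCommGroup E] [Module ℂ E] [SMul Aᵐᵒᵖ E] [CStarModuleRight A E]

/-- `y` and `z` satisfy the adjoint relation for `T`: `⟪Tx, y⟫ = ⟪x, z⟫` for all `x ∈ dom T`. -/
def AdjRel (T : UnboundedOperator E) (y z : E) : Prop :=
  ∀ x : T.dom, ⟪T.toFun x, y⟫_A = ⟪(x : E), z⟫_A

/-- The domain of the adjoint of `T`. -/
def adjDom (T : UnboundedOperator E) : Set E := {y | ∃ z, T.AdjRel (A := A) y z}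

/-- `T` is semiregular: both `T` and its adjoint are densely defined. -/
def Semiregular (T : UnboundedOperator E) : Prop :=
  Dense (T.dom : Set E) ∧ Dense (T.adjDom (A := A))

/-- The graph of `T` as a subset of `E × E`. -/
def graph (T : UnboundedOperator E) : Set (E × E) :=
  {p | ∃ x : T.dom, p = ((x : E), T.toFun x)}

/-- `T` is a closed operator. -/
def IsClosedOp (T : UnboundedOperator E) : Prop := IsClosed T.graph

/-- `S` is the adjoint of `T`. -/
def IsAdjointOf (S T : UnboundedOperator E) : Prop :=
  (S.dom : Set E) = T.adjDom (A := A) ∧ ∀ y : S.dom, T.AdjRel (A := A) (y : E) (S.toFun y)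

/-- `T` is symmetric. -/
def Symmetric (T : UnboundedOperator E) : Prop :=
  ∀ x y : T.dom, ⟪T.toFun x, (y : E)⟫_A = ⟪(x : E), T.toFun y⟫_A

/-- `T` is selfadjoint: it is its own adjoint. -/
def SelfAdjointOp (T : UnboundedOperator E) : Prop := IsAdjointOf (A := A) T T

/-- The range of `I + S ∘ T` (for `S` the adjoint of `T` this is the range of `I + T⋆T`). -/
def ranIdAddMul (S T : UnboundedOperator E) : Set E :=
  {y | ∃ (x : T.dom) (hx : T.toFun x ∈ S.dom), y = (x : E) + S.toFun ⟨T.toFun x, hx⟩}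

/-- `T` is regular: it is closed, semiregular, and `I + T⋆T` has dense range. -/
def Regular (T : UnboundedOperator E) : Prop :=
  T.IsClosedOp ∧ T.Semiregular (A := A) ∧
    ∀ S : UnboundedOperator E, IsAdjointOf (A := A) S T → Dense (ranIdAddMul S T)

/-- `Tc` is the closure of `T`: its graph is the closure of the graph of `T`. -/
def IsClosureOf (Tc T : UnboundedOperator E) : Prop :=
  Tc.graph = closure T.graph

end UnboundedOperator

/-- A state on a C⋆-algebra: a positive continuous linear functional of norm one. -/
structure CStarState (A : Type*) [CStarAlgebra A] [PartialOrder A] where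
  toFun : A →L[ℂ] ℂ
  pos : ∀ a : A, 0 ≤ a → 0 ≤ toFun a
  norm_one : ‖toFun‖ = 1

namespace CStarState

variable {A E : Type*} [CStarAlgebra A] [PartialOrder A] [StarOrderedRing A]
  [NormedAddCommGroup E] [Module ℂ E] [SMul Aᵐᵒᵖ E] [CStarModuleRight A E]

/-- A pure state: an extreme point of the state space. -/
def IsPure (ω : CStarState A) : Prop :=
  ∀ (φ ψ : CStarState A) (t : ℝ), 0 < t → t < 1 →
    (∀ a : A, ω.toFun a = (t : ℂ) * φ.toFun a + ((1 - t : ℝ) : ℂ) * ψ.toFun a) →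
    φ.toFun = ω.toFun ∧ ψ.toFun = ω.toFun

/-- The squared seminorm on `E` induced by the state `ω`: the squared norm of the image
of `x` in the localization Hilbert space `E^ω`. -/
def locSq (ω : CStarState A) (x : E) : ℝ := (ω.toFun (⟪x, x⟫_A : A)).re

end CStarState


section SeparationAux

open Metric

variable {A : Type*} [CStarAlgebra A] [PartialOrder A] [StarOrderedRing A]

private lemma aux_smul_le {b c : A} {t : ℝ} (hbc : b ≤ c) (ht : 0 ≤ t) : t • b ≤ t • c := by
  have h := smul_nonneg ht (sub_nonneg.mpr hbc)
  rw [smul_sub] at h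
  exact sub_nonneg.mp h

private lemma aux_smul_nonpos {c : A} {t : ℝ} (ht : 0 ≤ t) (hc : c ≤ 0) : t • c ≤ 0 := by
  have := smul_nonneg ht (neg_nonneg.mpr hc)
  rw [smul_neg] at this
  exact neg_nonneg.mp this

/-- Core separation lemma: given a convex set `K` of selfadjoint elements, each of which
dominates a positive element of norm at least `δ > 0`, there is a state uniformly positive
on `K`. -/
private lemma exists_state_core (K : Set A) (hK : Convex ℝ K)
    (hKsa : ∀ a ∈ K, IsSelfAdjoint a) (a₀ : A) (ha₀ : a₀ ∈ K)
    (δ : ℝ) (hδ : 0 < δ)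
    (hlow : ∀ a ∈ K, ∃ b : A, 0 ≤ b ∧ b ≤ a ∧ δ ≤ ‖b‖) :
    ∃ (ω : CStarState A) (ε : ℝ), 0 < ε ∧ ∀ a ∈ K, ε ≤ (ω.toFun a).re := by
  classical
  set N : Set A := {c | c ≤ 0} with hN
  have hNconv : Convex ℝ N := by
    intro x hx y hy s t hs ht _
    exact add_nonpos (aux_smul_nonpos hs hx) (aux_smul_nonpos ht hy)
  have hsub : N ⊆ thickening (δ / 2) N := self_subset_thickening (by positivity) N
  have hdisj : Disjoint (thickening (δ / 2) N) K := by
    rw [Set.disjoint_left]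
    intro a ha haK
    obtain ⟨c, hcN, hdist⟩ := Metric.mem_thickening_iff.mp ha
    obtain ⟨b, hb0, hba, hbn⟩ := hlow a haK
    have h1 : b ≤ a - c := hba.trans ((le_sub_self_iff a).mpr hcN)
    have h2 : ‖b‖ ≤ ‖a - c‖ := CStarAlgebra.norm_le_norm_of_nonneg_of_le hb0 h1
    rw [dist_eq_norm] at hdist
    linarith
  obtain ⟨f, u, hfN, hfK⟩ :=
    geometric_hahn_banach_open (hNconv.thickening _) isOpen_thickening hK hdisj
  have hu : 0 < u := by
    have h0 : (0 : A) ∈ N := le_refl 0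
    simpa using hfN 0 (hsub h0)
  have hfneg : ∀ c ∈ N, f c ≤ 0 := by
    intro c hc
    by_contra h
    push_neg at h
    have hlt : ∀ t : ℝ, 0 ≤ t → t * f c < u := by
      intro t htt
      have hmem : t • c ∈ N := aux_smul_nonpos htt hc
      simpa using hfN _ (hsub hmem)
    have := hlt (u / f c) (le_of_lt (div_pos hu h))
    rw [div_mul_cancel₀ _ (ne_of_gt h)] at this
    exact lt_irrefl _ this
  set g : A →L[ℝ] ℝ :=
    (2 : ℝ)⁻¹ • (f + f.comp (starL' ℝ : A ≃L[ℝ] A).toContinuousLinearMap) with hgdef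
  have hg : ∀ x : A, g x = 2⁻¹ * (f x + f (star x)) := by
    intro x
    simp [hgdef]
    ring
  have hg_sa : ∀ x : A, IsSelfAdjoint x → g x = f x := by
    intro x hx
    rw [hg, hx.star_eq]
    ring
  set φ : A →L[ℂ] ℂ := StrongDual.extendRCLike g with hφdef
  have hφ_sa : ∀ x : A, IsSelfAdjoint x → φ x = (f x : ℂ) := by
    intro x hx
    rw [hφdef, ContinuousLinearMap.extendTo𝕜'_apply, RCLike.I_to_complex]
    have h2 : g (Complex.I • x) = 0 := by
      have hst : star (Complex.I • x) = -(Complex.I • x) := by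
        rw [star_smul, hx.star_eq, RCLike.star_def, Complex.conj_I, neg_smul]
      have h3 := hg (Complex.I • x)
      rw [hst, map_neg] at h3
      linarith
    rw [h2, hg_sa x hx]
    simp
  have hφpos : ∀ a : A, 0 ≤ a → 0 ≤ φ a := by
    intro a ha
    rw [hφ_sa a ha.isSelfAdjoint]
    have h4 : 0 ≤ f a := by
      have := hfneg (-a) (show -a ≤ 0 from neg_nonpos.mpr ha)
      rw [map_neg] at this
      linarith
    exact_mod_cast Complex.zero_le_real.mpr h4
  have hφK : ∀ a ∈ K, u ≤ (φ a).re := by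
    intro a haK
    rw [hφ_sa a (hKsa a haK)]
    simpa using hfK a haK
  have hφnorm : 0 < ‖φ‖ := by
    rw [norm_pos_iff]
    intro hzero
    have h5 := hφK a₀ ha₀
    rw [hzero] at h5
    simp at h5
    linarith
  have hinv : (0 : ℝ) ≤ ‖φ‖⁻¹ := inv_nonneg.mpr hφnorm.le
  refine ⟨⟨((‖φ‖⁻¹ : ℝ) : ℂ) • φ, ?_, ?_⟩, ‖φ‖⁻¹ * u, by positivity, ?_⟩
  · intro a ha
    have h0 := hφpos a ha
    rw [Complex.nonneg_iff] at h0 ⊢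
    simp only [ContinuousLinearMap.smul_apply, smul_eq_mul, Complex.re_ofReal_mul,
      Complex.im_ofReal_mul]
    exact ⟨mul_nonneg hinv h0.1, by rw [← h0.2, mul_zero]⟩
  · rw [norm_smul ((‖φ‖⁻¹ : ℝ) : ℂ) φ, Complex.norm_real, Real.norm_eq_abs,
      abs_of_pos (inv_pos.mpr hφnorm), inv_mul_cancel₀ hφnorm.ne']
  · intro a haK
    have h1 := hφK a haK
    simp only [ContinuousLinearMap.smul_apply, smul_eq_mul, Complex.re_ofReal_mul]
    exact mul_le_mul_of_nonneg_left h1 hinv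

end SeparationAux

section SeparationAux2

variable {A E : Type*} [CStarAlgebra A] [PartialOrder A] [StarOrderedRing A]
  [NormedAddCommGroup E] [NormedSpace ℂ E] [SMul Aᵐᵒᵖ E] [CStarModuleRight A E]

private lemma cmr_inner_add_right (x y z : E) : ⟪x, y + z⟫_A = ⟪x, y⟫_A + ⟪x, z⟫_A :=
  CStarModuleRight.inner_add_right

private lemma cmr_star_inner (x y : E) : star ⟪x, y⟫_A = ⟪y, x⟫_A :=
  CStarModuleRight.star_inner x y

private lemma cmr_inner_add_left (x y z : E) : ⟪x + y, z⟫_A = ⟪x, z⟫_A + ⟪y, z⟫_A := by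
  rw [← cmr_star_inner z, cmr_inner_add_right, star_add, cmr_star_inner, cmr_star_inner]

private lemma cmr_inner_sub_right (x y z : E) : ⟪x, y - z⟫_A = ⟪x, y⟫_A - ⟪x, z⟫_A := by
  rw [eq_sub_iff_add_eq, ← cmr_inner_add_right, sub_add_cancel]

private lemma cmr_inner_sub_left (x y z : E) : ⟪x - y, z⟫_A = ⟪x, z⟫_A - ⟪y, z⟫_A := by
  rw [eq_sub_iff_add_eq, ← cmr_inner_add_left, sub_add_cancel]

private lemma cmr_inner_smul_right_real (x y : E) (r : ℝ) : ⟪x, r • y⟫_A = r • ⟪x, y⟫_A := by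
  rw [RCLike.real_smul_eq_coe_smul (K := ℂ) r y, CStarModuleRight.inner_smul_right_complex,
    ← RCLike.real_smul_eq_coe_smul (K := ℂ)]

private lemma cmr_inner_smul_left_real (x y : E) (r : ℝ) : ⟪r • x, y⟫_A = r • ⟪x, y⟫_A := by
  rw [← cmr_star_inner y, cmr_inner_smul_right_real, star_smul, star_trivial, cmr_star_inner]

private lemma cmr_inner_self_nonneg (x : E) : 0 ≤ ⟪x, x⟫_A :=
  CStarModuleRight.inner_self_nonneg

private lemma cmr_isSelfAdjoint_inner_self (x : E) : IsSelfAdjoint ⟪x, x⟫_A :=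
  cmr_star_inner x x

private lemma cmr_norm_sq_eq (x : E) : ‖x‖ ^ 2 = ‖⟪x, x⟫_A‖ := by
  rw [CStarModuleRight.norm_eq_sqrt_norm_inner_self x, Real.sq_sqrt (norm_nonneg _)]

/-- Two-point convexity of the C⋆-module square. -/
private lemma inner_self_convex (z₁ z₂ : E) {s t : ℝ} (hs : 0 ≤ s) (ht : 0 ≤ t)
    (hst : s + t = 1) :
    ⟪s • z₁ + t • z₂, s • z₁ + t • z₂⟫_A ≤ s • ⟪z₁, z₁⟫_A + t • ⟪z₂, z₂⟫_A := by
  have hts : t = 1 - s := by linarith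
  subst hts
  rw [← sub_nonneg]
  have key : s • ⟪z₁, z₁⟫_A + (1 - s) • ⟪z₂, z₂⟫_A -
      ⟪s • z₁ + (1 - s) • z₂, s • z₁ + (1 - s) • z₂⟫_A
      = (s * (1 - s)) • ⟪z₁ - z₂, z₁ - z₂⟫_A := by
    simp only [cmr_inner_add_left, cmr_inner_add_right,
      cmr_inner_sub_left, cmr_inner_sub_right,
      cmr_inner_smul_left_real, cmr_inner_smul_right_real,
      smul_sub, smul_add, smul_smul]
    module
  rw [key]
  exact smul_nonneg (mul_nonneg hs (by linarith)) (cmr_inner_self_nonneg _)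

end SeparationAux2

/-- **Separation theorem for Hilbert C⋆-modules.** Let `L ⊆ E` be a closed convex subset of the
Hilbert C⋆-module `E` over `A`. For each vector `x₀ ∈ E \ L` there exists a state `ω` on `A`
such that the image `ι_ω(x₀)` of `x₀` in the localization Hilbert space `E^ω` is not in the
closure of `ι_ω(L)`; i.e. the `ω`-distance from `x₀` to `L` is bounded below by some `ε > 0`.
(In particular `ι_ω(L)` is not dense in `E^ω` and, when `L` is a submodule, its closure has
nonzero orthogonal complement.) -/
theorem separation_theorem
    {A E : Type*} [CStarAlgebra A] [PartialOrder A] [StarOrderedRing A] [Nontrivial A]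
    [NormedAddCommGroup E] [NormedSpace ℂ E] [SMul Aᵐᵒᵖ E] [CStarModuleRight A E]
    (L : Set E) (hLconv : Convex ℝ L) (hLclosed : IsClosed L)
    (x₀ : E) (hx₀ : x₀ ∉ L) :
    ∃ (ω : CStarState A) (ε : ℝ), 0 < ε ∧ ∀ y ∈ L, ε ≤ ω.locSq (y - x₀) := by
  rcases L.eq_empty_or_nonempty with hLe | ⟨y₀, hy₀⟩
  · obtain ⟨ω, ε, hε, -⟩ := exists_state_core (A := A) {(1 : A)} (convex_singleton 1)
      (by rintro a rfl; exact IsSelfAdjoint.one A) 1 rfl 1 one_pos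
      (by rintro a rfl; exact ⟨1, zero_le_one, le_refl _, by rw [norm_one]⟩)
    exact ⟨ω, ε, hε, by simp [hLe]⟩
  · set q : E → A := fun y => ⟪y - x₀, y - x₀⟫_A with hq
    set d : ℝ := Metric.infDist x₀ L with hd
    have hdpos : 0 < d := (hLclosed.notMem_iff_infDist_pos ⟨y₀, hy₀⟩).mp hx₀
    set S : Set A := q '' L with hS
    set K : Set A := convexHull ℝ S with hK
    have hd_le : ∀ y ∈ L, d ^ 2 ≤ ‖q y‖ := by
      intro y hy
      have h1 : d ≤ ‖y - x₀‖ := by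
        rw [← dist_eq_norm, dist_comm]
        exact Metric.infDist_le_dist_of_mem hy
      have h2 : ‖y - x₀‖ ^ 2 = ‖q y‖ := cmr_norm_sq_eq _
      nlinarith
    have hKsub : K ⊆ {a : A | ∃ y ∈ L, q y ≤ a} := by
      apply convexHull_min
      · rintro a ⟨y, hy, rfl⟩
        exact ⟨y, hy, le_refl _⟩
      · rintro a₁ ⟨y₁, hy₁, hqy₁⟩ a₂ ⟨y₂, hy₂, hqy₂⟩ s t hs ht hst
        refine ⟨s • y₁ + t • y₂, hLconv hy₁ hy₂ hs ht hst, ?_⟩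
        have hts : t = 1 - s := by linarith
        subst hts
        have hrw : s • y₁ + (1 - s) • y₂ - x₀ = s • (y₁ - x₀) + (1 - s) • (y₂ - x₀) := by
          module
        calc q (s • y₁ + (1 - s) • y₂)
            = ⟪s • (y₁ - x₀) + (1 - s) • (y₂ - x₀),
                s • (y₁ - x₀) + (1 - s) • (y₂ - x₀)⟫_A := by
              simp only [hq]; rw [hrw]
          _ ≤ s • q y₁ + (1 - s) • q y₂ := inner_self_convex _ _ hs ht (by linarith)
          _ ≤ s • a₁ + (1 - s) • a₂ :=
              add_le_add (aux_smul_le hqy₁ hs) (aux_smul_le hqy₂ ht)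
    have hKsa : ∀ a ∈ K, IsSelfAdjoint a := by
      have hconv : Convex ℝ {a : A | IsSelfAdjoint a} := by
        intro x hx y hy s t hs ht _
        show star _ = _
        rw [star_add, star_smul, star_smul, star_trivial (s : ℝ), star_trivial (t : ℝ),
          hx.star_eq, hy.star_eq]
      exact fun a ha => convexHull_min
        (by rintro b ⟨y, hy, rfl⟩; exact cmr_isSelfAdjoint_inner_self _) hconv ha
    obtain ⟨ω, ε, hε, hωK⟩ := exists_state_core K (convex_convexHull ℝ S) hKsa
      (q y₀) (subset_convexHull ℝ S ⟨y₀, hy₀, rfl⟩) (d ^ 2) (by positivity)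
      (by
        intro a ha
        obtain ⟨y, hy, hqa⟩ := hKsub ha
        exact ⟨q y, cmr_inner_self_nonneg _, hqa, hd_le y hy⟩)
    refine ⟨ω, ε, hε, ?_⟩
    intro y hy
    exact hωK (q y) (subset_convexHull ℝ S ⟨y, hy, rfl⟩)


end
end
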